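/- With the same notation, if x_k^⊤(I - P_{-k})x_k ≠ 0 and P = X^† X, then P - P_{-k} = (I - P_{-k}) x_k x_k^⊤ (I - P_{-k}) / (x_k^⊤ (I - P_{-k}) x_k). In particular P - P_{-k} is positive semi-definite of rank at most 1. -/

import Mathlib

open Matrix

/-- `B` is the Moore-Penrose pseudoinverse of `A`. -/
def IsMoorePenrose {m n : Type*} [Fintype m] [Fintype n] (A : Matrix m n ℝ) (B : Matrix n m ℝ) :
    Prop :=
  A * B * A = A ∧ B * A * B = B ∧ (A * B)ᵀ = A * B ∧ (B * A)ᵀ = B * A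

lemma aux_mul_vecMulVec {n m p : Type*} [Fintype m] (A : Matrix n m ℝ) (u : m → ℝ) (v : p → ℝ) :
    A * vecMulVec u v = vecMulVec (A *ᵥ u) v := by
  ext i j
  simp [vecMulVec_apply, mul_apply, mulVec, dotProduct, Finset.sum_mul, mul_assoc]

lemma aux_vecMulVec_mul {n m p : Type*} [Fintype m] (A : Matrix m p ℝ) (u : n → ℝ) (v : m → ℝ) :
    vecMulVec u v * A = vecMulVec u (v ᵥ* A) := by
  ext i j
  simp only [vecMulVec_apply, mul_apply, vecMul, dotProduct, Finset.mul_sum, mul_assoc]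

lemma aux_vecMulVec_mulVec {n m : Type*} [Fintype m] (u : n → ℝ) (v : m → ℝ) (w : m → ℝ) :
    vecMulVec u v *ᵥ w = (v ⬝ᵥ w) • u := by
  funext j
  simp only [vecMulVec_apply, mulVec, dotProduct, Pi.smul_apply, smul_eq_mul, Finset.sum_mul]
  exact Finset.sum_congr rfl fun l _ => by ring

/-- Rank-one projection update: `P - P_{-k} = (I-P_{-k}) x_k x_kᵀ (I-P_{-k}) / (x_kᵀ(I-P_{-k})x_k)`,
a positive semi-definite matrix of rank at most 1. -/
theorem stmt1 {k n : ℕ} (hkn : k + 1 < n)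
    (X : Matrix (Fin (k + 1)) (Fin n) ℝ)
    (Xm : Matrix (Fin k) (Fin n) ℝ) (hXm : ∀ i j, Xm i j = X i.castSucc j)
    (x : Fin n → ℝ) (hx : x = X (Fin.last k))
    (Xp : Matrix (Fin n) (Fin (k + 1)) ℝ) (hXp : IsMoorePenrose X Xp)
    (Xmp : Matrix (Fin n) (Fin k) ℝ) (hXmp : IsMoorePenrose Xm Xmp)
    (P : Matrix (Fin n) (Fin n) ℝ) (hP : P = Xp * X)
    (Pm : Matrix (Fin n) (Fin n) ℝ) (hPm : Pm = Xmp * Xm)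
    (hq : x ⬝ᵥ (1 - Pm).mulVec x ≠ 0) :
    P - Pm = (x ⬝ᵥ (1 - Pm).mulVec x)⁻¹ • ((1 - Pm) * vecMulVec x x * (1 - Pm)) ∧
      (P - Pm).PosSemidef ∧ (P - Pm).rank ≤ 1 := by
  obtain ⟨hX1, hX2, hX3, hX4⟩ := hXp
  obtain ⟨hM1, hM2, hM3, hM4⟩ := hXmp
  -- basic projection facts
  have hPsym : Pᵀ = P := by rw [hP]; exact hX4
  have hPmsym : Pmᵀ = Pm := by rw [hPm]; exact hM4
  have hPm2 : Pm * Pm = Pm := by rw [hPm, ← Matrix.mul_assoc, hM2]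
  have hXP : X * P = X := by rw [hP, ← Matrix.mul_assoc, hX1]
  have hXmPm : Xm * Pm = Xm := by rw [hPm, ← Matrix.mul_assoc, hM1]
  have hXmP : Xm * P = Xm := by
    ext i j
    have := congrFun (congrFun hXP i.castSucc) j
    simp only [mul_apply] at this ⊢
    simp only [hXm]
    simpa using this
  -- q and y
  set q : ℝ := x ⬝ᵥ (1 - Pm).mulVec x with hqdef
  set y : Fin n → ℝ := (1 - Pm) *ᵥ x with hy
  have hSsym : (1 - Pm)ᵀ = 1 - Pm := by rw [transpose_sub, transpose_one, hPmsym]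
  have hvy : x ᵥ* (1 - Pm) = y := by
    rw [hy]; conv_lhs => rw [← hSsym]
    rw [vecMul_transpose]
  have hy' : y = x - Pm *ᵥ x := by rw [hy, sub_mulVec, one_mulVec]
  have hvecy : (1 - Pm) * vecMulVec x x * (1 - Pm) = vecMulVec y y := by
    rw [aux_mul_vecMulVec, aux_vecMulVec_mul, hvy, hy]
  have hPmy : Pm *ᵥ y = 0 := by
    rw [hy, mulVec_mulVec, Matrix.mul_sub, Matrix.mul_one, hPm2, sub_self, zero_mulVec]
  have hyperp : ∀ v, Pm *ᵥ v = v → y ⬝ᵥ v = 0 := by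
    intro v hv
    rw [← hv, dotProduct_mulVec]
    have : y ᵥ* Pm = 0 := by
      conv_lhs => rw [← hPmsym]
      rw [vecMul_transpose, hPmy]
    rw [this, zero_dotProduct]
  have hqy : q = y ⬝ᵥ y := by
    have h0 : (Pm *ᵥ x) ⬝ᵥ y = 0 := by
      rw [dotProduct_comm]
      exact hyperp _ (by rw [mulVec_mulVec, hPm2])
    have hxy : x = y + Pm *ᵥ x := by rw [hy']; abel
    calc q = x ⬝ᵥ y := hqdef
      _ = (y + Pm *ᵥ x) ⬝ᵥ y := by rw [← hxy]
      _ = y ⬝ᵥ y + (Pm *ᵥ x) ⬝ᵥ y := add_dotProduct _ _ _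
      _ = y ⬝ᵥ y := by rw [h0, add_zero]
  -- P fixes rows of X and hence y
  have hxvP : x ᵥ* P = x := by
    funext j
    rw [hx]
    have := congrFun (congrFun hXP (Fin.last k)) j
    simpa [mul_apply, vecMul, dotProduct] using this
  have hPx : P *ᵥ x = x := by rw [← hPsym, mulVec_transpose, hxvP]
  have hPPm : P * Pm = Pm := by
    have h1 : P * Xmᵀ = Xmᵀ := by rw [← hPsym, ← transpose_mul, hXmP]
    calc P * Pm = P * Pmᵀ := by rw [hPmsym]
      _ = P * Xmᵀ * Xmpᵀ := by rw [hPm, transpose_mul, Matrix.mul_assoc]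
      _ = Xmᵀ * Xmpᵀ := by rw [h1]
      _ = Pmᵀ := by rw [hPm, transpose_mul]
      _ = Pm := hPmsym
  have hPy : P *ᵥ y = y := by
    rw [hy', mulVec_sub, hPx, mulVec_mulVec, hPPm]
  -- define Q and R
  set Q : Matrix (Fin n) (Fin n) ℝ := q⁻¹ • vecMulVec y y with hQ
  set R : Matrix (Fin n) (Fin n) ℝ := Pm + Q with hR
  have hPQ : P * Q = Q := by
    rw [hQ, Matrix.mul_smul, aux_mul_vecMulVec, hPy]
  have hPR : P * R = R := by rw [hR, Matrix.mul_add, hPPm, hPQ]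
  -- R fixes the rows of X
  have hPmXi : ∀ i : Fin k, Pm *ᵥ X i.castSucc = X i.castSucc := by
    intro i
    have hXmi : Xm i = X i.castSucc := funext (hXm i)
    have hvm : Xm i ᵥ* Pm = Xm i := by
      funext j
      have := congrFun (congrFun hXmPm i) j
      simpa [mul_apply, vecMul, dotProduct] using this
    rw [← hXmi, ← hPmsym, mulVec_transpose, hvm]
  have hRX : ∀ i, R *ᵥ X i = X i := by
    intro i
    induction i using Fin.lastCases with
    | last =>
      rw [hR, add_mulVec, hQ, smul_mulVec, aux_vecMulVec_mulVec, ← hx]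
      have : y ⬝ᵥ x = q := by rw [dotProduct_comm, hqdef]
      rw [this, smul_smul, inv_mul_cancel₀ hq, one_smul, hy', add_sub_cancel]
    | cast i =>
      rw [hR, add_mulVec, hQ, smul_mulVec, aux_vecMulVec_mulVec,
        hyperp _ (hPmXi i), zero_smul, smul_zero, add_zero, hPmXi]
  have hRXt : R * Xᵀ = Xᵀ := by
    ext j i
    have := congrFun (hRX i) j
    simpa [mul_apply, mulVec, dotProduct] using this
  have hRP : R * P = P := by
    have hP' : P = Xᵀ * Xpᵀ := by rw [← hPsym, hP, transpose_mul]
    rw [hP', ← Matrix.mul_assoc, hRXt]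
  have hQsym : Qᵀ = Q := by
    rw [hQ, transpose_smul]
    congr 1
    ext i j
    simp [vecMulVec_apply, mul_comm]
  have hRsym : Rᵀ = R := by rw [hR, transpose_add, hPmsym, hQsym]
  have hPeqR : P = R := by
    have h1 : P * R = P := by
      have := congrArg Matrix.transpose hRP
      rwa [transpose_mul, hRsym, hPsym] at this
    rw [← h1, hPR]
  have hkey : P - Pm = Q := by rw [hPeqR, hR, add_sub_cancel_left]
  -- nonnegativity of q
  have hqpos : 0 < q := by
    rcases lt_or_eq_of_le (show (0:ℝ) ≤ q from hqy ▸ Finset.sum_nonneg fun i _ => mul_self_nonneg _) with h | h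
    · exact h
    · exact absurd h.symm hq
  refine ⟨?_, ?_, ?_⟩
  · rw [hkey, hvecy]
  · rw [hkey, hQ]
    rw [posSemidef_iff_dotProduct_mulVec]
    constructor
    · rw [Matrix.IsHermitian]
      rw [show (q⁻¹ • vecMulVec y y)ᴴ = (q⁻¹ • vecMulVec y y)ᵀ by
        ext i j; simp [conjTranspose_apply]]
      rw [transpose_smul]
      congr 1
      ext i j
      simp [vecMulVec_apply, mul_comm]
    · intro v
      rw [smul_mulVec, aux_vecMulVec_mulVec]
      have : star v = v := by funext i; simp
      rw [this, dotProduct_smul, dotProduct_smul, smul_eq_mul, smul_eq_mul]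
      have hvy2 : v ⬝ᵥ y = y ⬝ᵥ v := dotProduct_comm _ _
      rw [hvy2]
      exact mul_nonneg (inv_nonneg.mpr hqpos.le) (mul_self_nonneg _)
  · rw [hkey, hQ, vecMulVec_eq Unit, ← Matrix.smul_mul]
    calc ((q⁻¹ • Matrix.replicateCol Unit y) * Matrix.replicateRow Unit y).rank
        ≤ (q⁻¹ • Matrix.replicateCol Unit y).rank := rank_mul_le_left _ _
      _ ≤ Fintype.card Unit := rank_le_card_width _
      _ = 1 := by simp
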